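/- Let M be a structure in a finite relational language, let A ⊆ M^(k) be a set of pairwise disjoint k-tuples that is totally indiscernible over its complement, and let B ⊆ A. Then B is totally indiscernible over its complement. -/
import Mathlib


/- STATEMENT 9: Let `M` be a structure in a finite relational language and `A ⊆ M^(k)` a set
of pairwise disjoint `k`-tuples that is totally indiscernible over its complement.  Then any
`B ⊆ A` is totally indiscernible over its complement. -/

open FirstOrder Language Set

universe u v w

namespace Stmt9

variable (L : FirstOrder.Language.{v, w})

/-- Equality of quantifier-free types of two tuples over a parameter set. -/
def QFTypeEqOn {M : Type u} [L.Structure M] {α : Type} (c c' : α → M) (A : Set M) : Prop :=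
  ∀ (n : ℕ) (φ : L.Formula (α ⊕ Fin n)), BoundedFormula.IsQF φ →
    ∀ e : Fin n → M, (∀ i, e i ∈ A) →
      (φ.Realize (Sum.elim c e) ↔ φ.Realize (Sum.elim c' e))

/-- A set of `k`-tuples is totally indiscernible over its complement `M ∖ ⋃C`. -/
def TotIndiscOverCompl {M : Type u} [L.Structure M] (k : ℕ) (C : Set (Fin k → M)) : Prop :=
  ∀ (n : ℕ) (f g : Fin n → (Fin k → M)),
    (∀ i, f i ∈ C) → (∀ i, g i ∈ C) → Function.Injective f → Function.Injective g →
    QFTypeEqOn L (fun p : Fin n × Fin k => f p.1 p.2) (fun p : Fin n × Fin k => g p.1 p.2)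
      {x | ∀ a ∈ C, x ∉ Set.range a}

/-- Total indiscernibility over the complement passes to subsets. -/
theorem totIndiscOverCompl_subset
    [L.IsRelational] [Finite (Σ n, L.Relations n)]
    (M : Type u) [L.Structure M] (k : ℕ) (A B : Set (Fin k → M))
    (hInj : ∀ a ∈ A, Function.Injective a)
    (hDisj : ∀ a ∈ A, ∀ b ∈ A, a ≠ b → Disjoint (Set.range a) (Set.range b))
    (hTI : TotIndiscOverCompl L k A) (hBA : B ⊆ A) :
    TotIndiscOverCompl L k B := by
  classical
  intro n f g hf hg hfinj hginj m φ hφ e he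
  -- complement of A
  set CA : Set M := {x | ∀ a ∈ A, x ∉ Set.range a} with hCA
  -- bad parameters: those lying in some tuple of A \ B
  have hbad : ∀ j : Fin m, e j ∉ CA → ∃ a, (a ∈ A ∧ a ∉ B) ∧ e j ∈ Set.range a := by
    intro j hj
    simp only [hCA, Set.mem_setOf_eq, not_forall, not_not] at hj
    obtain ⟨a, ha, hea⟩ := hj
    exact ⟨a, ⟨ha, fun hb => he j a hb hea⟩, hea⟩
  let Bad := {j : Fin m // e j ∉ CA}
  let aa : Bad → (Fin k → M) := fun j => (hbad j.1 j.2).choose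
  have haaA : ∀ j, aa j ∈ A := fun j => ((hbad j.1 j.2).choose_spec).1.1
  have haaB : ∀ j, aa j ∉ B := fun j => ((hbad j.1 j.2).choose_spec).1.2
  have haae : ∀ j, e j.1 ∈ Set.range (aa j) := fun j => ((hbad j.1 j.2).choose_spec).2
  let idx : Bad → Fin k := fun j => (haae j).choose
  have hidx : ∀ j, aa j (idx j) = e j.1 := fun j => (haae j).choose_spec
  -- enumerate the tuples used
  haveI : Fintype Bad := Subtype.fintype _
  haveI : Fintype (Set.range aa) := Set.fintypeRange aa
  let t := Fintype.card (Set.range aa)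
  let eT : (Set.range aa) ≃ Fin t := Fintype.equivFin _
  let h : Fin t → (Fin k → M) := fun i => (eT.symm i).1
  have hinj : Function.Injective h := fun i j hij => by
    apply eT.symm.injective; exact Subtype.ext hij
  have hhA : ∀ i, h i ∈ A := by
    intro i
    obtain ⟨j, hj⟩ := (eT.symm i).2
    simpa [h, ← hj] using haaA j
  have hhB : ∀ i, h i ∉ B := by
    intro i
    obtain ⟨j, hj⟩ := (eT.symm i).2
    simpa [h, ← hj] using haaB j
  let ι : Bad → Fin t := fun j => eT ⟨aa j, Set.mem_range_self j⟩
  have hι : ∀ j, h (ι j) = aa j := fun j => by simp [h, ι]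
  -- good parameters
  let Good := {j : Fin m // e j ∈ CA}
  haveI : Fintype Good := Subtype.fintype _
  let m' := Fintype.card Good
  let eG : Good ≃ Fin m' := Fintype.equivFin _
  let e' : Fin m' → M := fun i => e (eG.symm i).1
  have he' : ∀ i, e' i ∈ CA := fun i => (eG.symm i).2
  -- the extended tuples
  let F : Fin (n + t) → (Fin k → M) := Fin.append f h
  let G : Fin (n + t) → (Fin k → M) := Fin.append g h
  have happF : ∀ i : Fin n, F (Fin.castAdd t i) = f i := fun i => Fin.append_left f h i
  have happF' : ∀ i : Fin t, F (Fin.natAdd n i) = h i := fun i => Fin.append_right f h i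
  have happG : ∀ i : Fin n, G (Fin.castAdd t i) = g i := fun i => Fin.append_left g h i
  have happG' : ∀ i : Fin t, G (Fin.natAdd n i) = h i := fun i => Fin.append_right g h i
  have hsplit : ∀ i : Fin (n + t), (∃ j, i = Fin.castAdd t j) ∨ (∃ j, i = Fin.natAdd n j) :=
    fun i => Fin.addCases (fun j => Or.inl ⟨j, rfl⟩) (fun j => Or.inr ⟨j, rfl⟩) i
  have hFA : ∀ i, F i ∈ A := by
    intro i
    rcases hsplit i with ⟨j, rfl⟩ | ⟨j, rfl⟩
    · rw [happF]; exact hBA (hf j)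
    · rw [happF']; exact hhA j
  have hGA : ∀ i, G i ∈ A := by
    intro i
    rcases hsplit i with ⟨j, rfl⟩ | ⟨j, rfl⟩
    · rw [happG]; exact hBA (hg j)
    · rw [happG']; exact hhA j
  have hFinj : Function.Injective F := by
    intro i j hij
    rcases hsplit i with ⟨i', rfl⟩ | ⟨i', rfl⟩ <;>
      rcases hsplit j with ⟨j', rfl⟩ | ⟨j', rfl⟩
    · rw [happF, happF] at hij; exact congrArg _ (hfinj hij)
    · rw [happF, happF'] at hij; exact absurd (hij ▸ hf i') (hhB j')
    · rw [happF', happF] at hij; exact absurd (hij ▸ hf j') (hij ▸ hhB i')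
    · rw [happF', happF'] at hij; exact congrArg _ (hinj hij)
  have hGinj : Function.Injective G := by
    intro i j hij
    rcases hsplit i with ⟨i', rfl⟩ | ⟨i', rfl⟩ <;>
      rcases hsplit j with ⟨j', rfl⟩ | ⟨j', rfl⟩
    · rw [happG, happG] at hij; exact congrArg _ (hginj hij)
    · rw [happG, happG'] at hij; exact absurd (hij ▸ hg i') (hhB j')
    · rw [happG', happG] at hij; exact absurd (hij ▸ hg j') (hij ▸ hhB i')
    · rw [happG', happG'] at hij; exact congrArg _ (hinj hij)
  -- relabeling
  let r : (Fin n × Fin k) ⊕ Fin m → (Fin (n + t) × Fin k) ⊕ Fin m' :=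
    Sum.elim (fun p => Sum.inl (Fin.castAdd t p.1, p.2))
      (fun j => if hj : e j ∈ CA then Sum.inr (eG ⟨j, hj⟩)
        else Sum.inl (Fin.natAdd n (ι ⟨j, hj⟩), idx ⟨j, hj⟩))
  have key := hTI (n + t) F G hFA hGA hFinj hGinj m' (φ.relabel r)
    (hφ.relabel (Sum.inl ∘ r)) e' he'
  have hcF : (Sum.elim (fun p : Fin (n + t) × Fin k => F p.1 p.2) e') ∘ r
      = Sum.elim (fun p : Fin n × Fin k => f p.1 p.2) e := by
    funext x
    rcases x with p | j
    · simp [r, happF p.1]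
    · by_cases hj : e j ∈ CA
      · simp [r, hj, e']
      · simp only [r, Function.comp_apply, Sum.elim_inr, dif_neg hj, Sum.elim_inl]
        rw [happF', hι, hidx]
  have hcG : (Sum.elim (fun p : Fin (n + t) × Fin k => G p.1 p.2) e') ∘ r
      = Sum.elim (fun p : Fin n × Fin k => g p.1 p.2) e := by
    funext x
    rcases x with p | j
    · simp [r, happG p.1]
    · by_cases hj : e j ∈ CA
      · simp [r, hj, e']
      · simp only [r, Function.comp_apply, Sum.elim_inr, dif_neg hj, Sum.elim_inl]
        rw [happG', hι, hidx]
  rw [Formula.realize_relabel, Formula.realize_relabel, hcF, hcG] at key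
  exact key


end Stmt9
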